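/- A nonnegative square matrix B is reducible if and only if ρ(B) equals the spectral radius of some proper principal submatrix of B. -/

import Mathlib

open scoped Classical
open Matrix

/-- Spectral radius: largest modulus of (complex) eigenvalues, i.e. roots of the
characteristic polynomial of the complexified matrix. -/
noncomputable def specRad {m : Type*} [Fintype m] [DecidableEq m] (M : Matrix m m ℝ) : ℝ :=
  sSup {r : ℝ | ∃ μ : ℂ, (M.map Complex.ofReal).charpoly.IsRoot μ ∧ r = ‖μ‖}

/-- Irreducibility of a matrix: the associated digraph is strongly connected. -/
def Irred {n : ℕ} (M : Matrix (Fin n) (Fin n) ℝ) : Prop :=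
  ∀ i j : Fin n, Relation.ReflTransGen (fun a b => M a b ≠ 0) i j

/-- Outdegree of a vertex in a digraph on `Fin n`. -/
noncomputable def outdeg {n : ℕ} (G : Fin n → Fin n → Prop) (i : Fin n) : ℕ :=
  (Finset.univ.filter (fun j => G i j)).card

/-- Indegree of a vertex. -/
noncomputable def indeg {n : ℕ} (G : Fin n → Fin n → Prop) (i : Fin n) : ℕ :=
  (Finset.univ.filter (fun j => G j i)).card

/-- The matrix `A_α(G) = α D(G) + (1-α) A(G)`. -/
noncomputable def Aalpha {n : ℕ} (α : ℝ) (G : Fin n → Fin n → Prop) :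
    Matrix (Fin n) (Fin n) ℝ :=
  α • Matrix.diagonal (fun i => (outdeg G i : ℝ)) +
    (1 - α) • (Matrix.of fun i j => if G i j then (1 : ℝ) else 0)

/-- The `A_α` spectral radius of a digraph. -/
noncomputable def lamAlpha {n : ℕ} (α : ℝ) (G : Fin n → Fin n → Prop) : ℝ :=
  specRad (Aalpha α G)

/-- Strong connectivity of a digraph. -/
def SConn {n : ℕ} (G : Fin n → Fin n → Prop) : Prop :=
  ∀ u v : Fin n, Relation.ReflTransGen G u v

/-- Isomorphism of digraphs on `Fin n`. -/
def DIso {n : ℕ} (G H : Fin n → Fin n → Prop) : Prop :=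
  ∃ e : Equiv.Perm (Fin n), ∀ u v, G u v ↔ H (e u) (e v)

/-- The directed cycle on `Fin n`. -/
def dirCycle (n : ℕ) : Fin n → Fin n → Prop :=
  fun i j => j.val = (i.val + 1) % n


/-- Deleting a set of vertices from a digraph. -/
def delVerts {n : ℕ} (G : Fin n → Fin n → Prop) (S : Finset (Fin n)) :
    Fin n → Fin n → Prop :=
  fun a b => G a b ∧ a ∉ S ∧ b ∉ S

/-- The digraph obtained by deleting the vertices of `S` is strongly connected. -/
def SConnAvoid {n : ℕ} (G : Fin n → Fin n → Prop) (S : Finset (Fin n)) : Prop :=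
  ∀ u v : Fin n, u ∉ S → v ∉ S → Relation.ReflTransGen (delVerts G S) u v

/-- The vertex connectivity of `G` equals `k`. -/
def vertexConnIs {n : ℕ} (G : Fin n → Fin n → Prop) (k : ℕ) : Prop :=
  (∃ S : Finset (Fin n), S.card = k ∧ ¬ SConnAvoid G S) ∧
    ∀ S : Finset (Fin n), ¬ SConnAvoid G S → k ≤ S.card

/-- Deleting a set of arcs from a digraph. -/
def delArcs {n : ℕ} (G : Fin n → Fin n → Prop) (S : Finset (Fin n × Fin n)) :
    Fin n → Fin n → Prop :=
  fun a b => G a b ∧ (a, b) ∉ S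

/-- The arc connectivity of `G` equals `k`. -/
def arcConnIs {n : ℕ} (G : Fin n → Fin n → Prop) (k : ℕ) : Prop :=
  (∃ S : Finset (Fin n × Fin n), S.card = k ∧ ¬ SConn (delArcs G S)) ∧
    ∀ S : Finset (Fin n × Fin n), ¬ SConn (delArcs G S) → k ≤ S.card

/-- `G` contains a directed cycle of length `g`. -/
def hasCycleLen {n : ℕ} (G : Fin n → Fin n → Prop) (g : ℕ) : Prop :=
  ∃ c : Fin g → Fin n, Function.Injective c ∧
    ∀ i : Fin g, G (c i) (c ⟨(i.val + 1) % g, Nat.mod_lt _ i.pos⟩)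

/-- The girth of `G` equals `g`. -/
def girthIs {n : ℕ} (G : Fin n → Fin n → Prop) (g : ℕ) : Prop :=
  hasCycleLen G g ∧ ∀ m, 0 < m → m < g → ¬ hasCycleLen G m

/-- The clique number of `G` equals `d`. -/
def cliqueNumIs {n : ℕ} (G : Fin n → Fin n → Prop) (d : ℕ) : Prop :=
  (∃ S : Finset (Fin n), S.card = d ∧ ∀ u ∈ S, ∀ v ∈ S, u ≠ v → G u v ∧ G v u) ∧
    ∀ S : Finset (Fin n), (∀ u ∈ S, ∀ v ∈ S, u ≠ v → G u v ∧ G v u) → S.card ≤ d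

/-- The digraph `C_{n,g}`: the directed cycle `v_1 … v_g v_1` (indices `0,…,g-1`)
together with the directed path `v_g v_{g+1} … v_n v_1`. -/
def Cng (n g : ℕ) : Fin n → Fin n → Prop := fun i j =>
  j.val = i.val + 1 ∨ (i.val = g - 1 ∧ j.val = 0) ∨ (i.val = n - 1 ∧ j.val = 0)

/-- `C'_{n,g} = C_{n,g} - {(v_n, v_1)} + {(v_n, v_g)}`. -/
def Cng' (n g : ℕ) : Fin n → Fin n → Prop := fun i j =>
  j.val = i.val + 1 ∨ (i.val = g - 1 ∧ j.val = 0) ∨ (i.val = n - 1 ∧ j.val = g - 1)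

/-- The digraph `B_{n,d}`: a complete digraph on the `d` vertices
`{0} ∪ {n-d+1, …, n-1}` together with the directed path `v_1 v_2 … v_{n-d+2}`
(indices `0, 1, …, n-d+1`). -/
def Bnd (n d : ℕ) : Fin n → Fin n → Prop := fun i j =>
  (j.val = i.val + 1 ∧ j.val ≤ n - d + 1) ∨
    (i ≠ j ∧ (i.val = 0 ∨ n - d + 1 ≤ i.val) ∧ (j.val = 0 ∨ n - d + 1 ≤ j.val))

/-- `B'_{n,d} = B_{n,d} - {(v_{n-d+1}, v_{n-d+2})} + {(v_{n-d+1}, v_1)}`. -/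
def Bnd' (n d : ℕ) : Fin n → Fin n → Prop := fun i j =>
  (j.val = i.val + 1 ∧ j.val ≤ n - d) ∨ (i.val = n - d ∧ j.val = 0) ∨
    (i ≠ j ∧ (i.val = 0 ∨ n - d + 1 ≤ i.val) ∧ (j.val = 0 ∨ n - d + 1 ≤ j.val))

/-- The digraph `K(n,k,m)`: parts `K_m` (indices `< m`), `K_k` (indices in `[m, m+k)`),
`K_{n-k-m}` (indices `≥ m+k`); all parts complete, `K_k` joined both ways to the others,
and all one-way arcs from `K_m` to `K_{n-k-m}`. -/
def Knkm (n k m : ℕ) : Fin n → Fin n → Prop := fun i j =>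
  i ≠ j ∧ ¬(m + k ≤ i.val ∧ j.val < m)

namespace Stmt8Aux

open Polynomial Filter
open scoped NNReal ENNReal

variable {m : Type*} [Fintype m] [DecidableEq m]

/-- The set of moduli of complex eigenvalues. -/
def rs (M : Matrix m m ℝ) : Set ℝ :=
  {r : ℝ | ∃ μ : ℂ, (M.map Complex.ofReal).charpoly.IsRoot μ ∧ r = ‖μ‖}

lemma specRad_def (M : Matrix m m ℝ) : specRad M = sSup (rs M) := rfl

lemma eval_charpoly_complex (M : Matrix m m ℂ) (μ : ℂ) :
    M.charpoly.eval μ = (Matrix.diagonal (fun _ => μ) - M).det := by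
  rw [Matrix.charpoly, ← Polynomial.coe_evalRingHom, RingHom.map_det]
  congr 1
  ext i j
  by_cases h : i = j
  · subst h
    simp [Matrix.charmatrix_apply_eq]
  · simp [Matrix.charmatrix_apply_ne _ _ _ h, Matrix.diagonal_apply_ne _ h]

lemma charpoly_ne_zero (M : Matrix m m ℂ) : M.charpoly ≠ 0 :=
  (Matrix.charpoly_monic M).ne_zero

lemma rs_finite (M : Matrix m m ℝ) : (rs M).Finite := by
  have h : rs M ⊆ (fun μ : ℂ => ‖μ‖) '' {μ : ℂ | (M.map Complex.ofReal).charpoly.IsRoot μ} := by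
    rintro r ⟨μ, h1, rfl⟩; exact ⟨μ, h1, rfl⟩
  exact ((Polynomial.finite_setOf_isRoot (charpoly_ne_zero _)).image _).subset h

lemma rs_nonempty [Nonempty m] (M : Matrix m m ℝ) : (rs M).Nonempty := by
  have hdeg : 0 < (M.map Complex.ofReal).charpoly.degree := by
    rw [Matrix.charpoly_degree_eq_dim]
    exact_mod_cast Fintype.card_pos
  obtain ⟨z, hz⟩ := Complex.exists_root hdeg
  exact ⟨‖z‖, z, hz, rfl⟩

lemma le_specRad {M : Matrix m m ℝ} {μ : ℂ}
    (h : (M.map Complex.ofReal).charpoly.IsRoot μ) : ‖μ‖ ≤ specRad M :=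
  le_csSup (rs_finite M).bddAbove ⟨μ, h, rfl⟩

lemma specRad_mem [Nonempty m] (M : Matrix m m ℝ) :
    ∃ μ : ℂ, (M.map Complex.ofReal).charpoly.IsRoot μ ∧ specRad M = ‖μ‖ :=
  (rs_nonempty M).csSup_mem (rs_finite M)

lemma specRad_nonneg [Nonempty m] (M : Matrix m m ℝ) : 0 ≤ specRad M := by
  obtain ⟨μ, _, h⟩ := specRad_mem M
  rw [h]
  exact norm_nonneg _

lemma specRad_congr {m₂ : Type*} [Fintype m₂] [DecidableEq m₂]
    {M : Matrix m m ℝ} {M₂ : Matrix m₂ m₂ ℝ}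
    (h : (M.map Complex.ofReal).charpoly = (M₂.map Complex.ofReal).charpoly) :
    specRad M = specRad M₂ := by
  unfold specRad
  rw [h]

lemma exists_eigenvector {M : Matrix m m ℂ} {μ : ℂ} (h : M.charpoly.IsRoot μ) :
    ∃ v : m → ℂ, v ≠ 0 ∧ M *ᵥ v = μ • v := by
  have hdet : (Matrix.diagonal (fun _ => μ) - M).det = 0 := by
    rw [← eval_charpoly_complex]; exact h
  obtain ⟨v, hv0, hv⟩ := Matrix.exists_mulVec_eq_zero_iff.mpr hdet
  refine ⟨v, hv0, ?_⟩
  rw [Matrix.sub_mulVec, sub_eq_zero] at hv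
  rw [← hv]
  ext i
  simp [Matrix.mulVec_diagonal]

lemma isRoot_of_mem_spectrum {M : Matrix m m ℂ} {μ : ℂ} (h : μ ∈ spectrum ℂ M) :
    M.charpoly.IsRoot μ := by
  rw [spectrum.mem_iff] at h
  rw [Polynomial.IsRoot, eval_charpoly_complex]
  by_contra hd
  apply h
  have hAlg : (algebraMap ℂ (Matrix m m ℂ)) μ = Matrix.diagonal fun _ => μ := by
    ext i j
    simp [Matrix.algebraMap_matrix_apply, Matrix.diagonal]
  rw [hAlg, Matrix.isUnit_iff_isUnit_det]
  exact isUnit_iff_ne_zero.mpr hd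

lemma charpoly_subblocks {R : Type*} [CommRing R] {n : ℕ} (M : Matrix (Fin n) (Fin n) R)
    (S : Finset (Fin n)) (hclosed : ∀ a b, a ∈ S → b ∉ S → M a b = 0) :
    M.charpoly =
      (M.submatrix (fun i : {x // x ∈ S} => (i : Fin n))
        (fun i : {x // x ∈ S} => (i : Fin n))).charpoly *
      (M.submatrix (fun i : {x // x ∉ S} => (i : Fin n))
        (fun i : {x // x ∉ S} => (i : Fin n))).charpoly := by
  classical
  set e : {x // x ∈ S} ⊕ {x // x ∉ S} ≃ Fin n := Equiv.sumCompl _ with he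
  have h2 : Matrix.reindex e.symm e.symm M = Matrix.fromBlocks
      (M.submatrix (fun i : {x // x ∈ S} => (i : Fin n)) (fun i : {x // x ∈ S} => (i : Fin n))) 0
      (M.submatrix (fun i : {x // x ∉ S} => (i : Fin n)) (fun i : {x // x ∈ S} => (i : Fin n)))
      (M.submatrix (fun i : {x // x ∉ S} => (i : Fin n))
        (fun i : {x // x ∉ S} => (i : Fin n))) := by
    ext i j
    rcases i with a | a <;> rcases j with b | b
    · simp [he]
    · simp [he, hclosed a b a.2 b.2]
    · simp [he]
    · simp [he]
  calc M.charpoly = (Matrix.reindex e.symm e.symm M).charpoly :=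
        (Matrix.charpoly_reindex e.symm M).symm
    _ = _ := by rw [h2, Matrix.charpoly_fromBlocks_zero₁₂]

section Nonneg

variable {n : ℕ}

lemma mul_entry_nonneg {A C : Matrix (Fin n) (Fin n) ℝ} (hA : ∀ i j, 0 ≤ A i j)
    (hC : ∀ i j, 0 ≤ C i j) (i j : Fin n) : 0 ≤ (A * C) i j := by
  rw [Matrix.mul_apply]
  exact Finset.sum_nonneg fun k _ => mul_nonneg (hA i k) (hC k j)

lemma pow_entry_nonneg {A : Matrix (Fin n) (Fin n) ℝ} (hA : ∀ i j, 0 ≤ A i j) :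
    ∀ k i j, 0 ≤ (A ^ k) i j := by
  intro k
  induction k with
  | zero => intro i j; rw [pow_zero]; by_cases h : i = j <;> simp [Matrix.one_apply, h]
  | succ k ih => intro i j; rw [pow_succ]; exact mul_entry_nonneg ih hA i j

lemma mulVec_le_mulVec {A : Matrix (Fin n) (Fin n) ℝ} (hA : ∀ i j, 0 ≤ A i j)
    {v w : Fin n → ℝ} (hvw : ∀ j, v j ≤ w j) (i : Fin n) : (A *ᵥ v) i ≤ (A *ᵥ w) i := by
  simp only [Matrix.mulVec, dotProduct]
  exact Finset.sum_le_sum fun j _ => mul_le_mul_of_nonneg_left (hvw j) (hA i j)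

lemma single_le_mulVec {A : Matrix (Fin n) (Fin n) ℝ} (hA : ∀ i j, 0 ≤ A i j)
    {v : Fin n → ℝ} (hv : ∀ j, 0 ≤ v j) (i j0 : Fin n) : A i j0 * v j0 ≤ (A *ᵥ v) i := by
  simp only [Matrix.mulVec, dotProduct]
  exact Finset.single_le_sum (f := fun j => A i j * v j)
    (fun j _ => mul_nonneg (hA i j) (hv j)) (Finset.mem_univ j0)

lemma mulVec_nonneg {A : Matrix (Fin n) (Fin n) ℝ} (hA : ∀ i j, 0 ≤ A i j)
    {v : Fin n → ℝ} (hv : ∀ j, 0 ≤ v j) (i : Fin n) : 0 ≤ (A *ᵥ v) i := by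
  simp only [Matrix.mulVec, dotProduct]
  exact Finset.sum_nonneg fun j _ => mul_nonneg (hA i j) (hv j)

attribute [local instance] Matrix.linftyOpNormedRing Matrix.linftyOpNormedAlgebra

lemma le_specRad_of_subinvariant [Nonempty (Fin n)] {B : Matrix (Fin n) (Fin n) ℝ}
    (hB : ∀ i j, 0 ≤ B i j) {u : Fin n → ℝ} (hu : ∀ i, 0 < u i) {s : ℝ} (hs : 0 ≤ s)
    (h : ∀ i, s * u i ≤ (B *ᵥ u) i) : s ≤ specRad B := by
  rcases eq_or_lt_of_le hs with rfl | hs0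
  · exact specRad_nonneg B
  have hpow : ∀ k i, s ^ k * u i ≤ ((B ^ k) *ᵥ u) i := by
    intro k
    induction k with
    | zero => intro i; simp [Matrix.one_mulVec]
    | succ k ih =>
      intro i
      have h1 : (B ^ (k+1)) *ᵥ u = B *ᵥ ((B ^ k) *ᵥ u) := by
        rw [Matrix.mulVec_mulVec, ← pow_succ']
      rw [h1]
      calc s ^ (k+1) * u i = s ^ k * (s * u i) := by ring
        _ ≤ s ^ k * (B *ᵥ u) i :=
            mul_le_mul_of_nonneg_left (h i) (pow_nonneg hs k)
        _ = (B *ᵥ fun j => s ^ k * u j) i := by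
            simp only [Matrix.mulVec, dotProduct, Finset.mul_sum]
            exact Finset.sum_congr rfl fun j _ => by ring
        _ ≤ (B *ᵥ ((B ^ k) *ᵥ u)) i := mulVec_le_mulVec hB (fun j => ih j) i
  obtain ⟨i0⟩ := ‹Nonempty (Fin n)›
  set umax := Finset.univ.sup' Finset.univ_nonempty u with humax
  have humax0 : 0 < umax := lt_of_lt_of_le (hu i0) (Finset.le_sup' u (Finset.mem_univ i0))
  set c := u i0 / umax with hc
  have hc0 : 0 < c := div_pos (hu i0) humax0
  have hrow : ∀ k, c * s ^ k ≤ ∑ j, (B ^ k) i0 j := by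
    intro k
    have h1 : ((B ^ k) *ᵥ u) i0 ≤ (∑ j, (B ^ k) i0 j) * umax := by
      simp only [Matrix.mulVec, dotProduct]
      rw [Finset.sum_mul]
      exact Finset.sum_le_sum fun j _ =>
        mul_le_mul_of_nonneg_left (Finset.le_sup' u (Finset.mem_univ j))
          (pow_entry_nonneg hB k i0 j)
    have h2 : s ^ k * u i0 ≤ (∑ j, (B ^ k) i0 j) * umax := le_trans (hpow k i0) h1
    rw [hc, div_mul_eq_mul_div, div_le_iff₀ humax0]
    nlinarith [h2]
  set a := (B.map Complex.ofReal) with ha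
  have hak : ∀ k, a ^ k = (B ^ k).map Complex.ofReal := by
    intro k
    have h3 := map_pow (Complex.ofRealHom.mapMatrix) B k
    simp only [RingHom.mapMatrix_apply] at h3
    exact h3.symm
  have hnorm : ∀ k, c * s ^ k ≤ ‖a ^ k‖ := by
    intro k
    rw [hak k]
    have h1 : (∑ j, ‖((B ^ k).map Complex.ofReal) i0 j‖₊ : ℝ≥0) ≤
        ‖(B ^ k).map Complex.ofReal‖₊ := by
      rw [Matrix.linfty_opNNNorm_def]
      exact Finset.le_sup (f := fun i => ∑ j, ‖((B ^ k).map Complex.ofReal) i j‖₊) (Finset.mem_univ i0)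
    have h2 : ((∑ j, ‖((B ^ k).map Complex.ofReal) i0 j‖₊ : ℝ≥0) : ℝ) = ∑ j, (B ^ k) i0 j := by
      push_cast
      refine Finset.sum_congr rfl fun j _ => ?_
      simp [Matrix.map_apply, abs_of_nonneg (pow_entry_nonneg hB k i0 j)]
    calc c * s ^ k ≤ ∑ j, (B ^ k) i0 j := hrow k
      _ = _ := h2.symm
      _ ≤ ‖(B ^ k).map Complex.ofReal‖ := by exact_mod_cast h1
  have hT := spectrum.pow_nnnorm_pow_one_div_tendsto_nhds_spectralRadius a
  have key : ∀ t : ℝ, 0 < t → t < s → (t.toNNReal : ℝ≥0∞) ≤ spectralRadius ℂ a := by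
    intro t ht0 hts
    have hratio : Filter.Tendsto (fun k : ℕ => (t / s) ^ k) Filter.atTop (nhds 0) := by
      apply tendsto_pow_atTop_nhds_zero_of_lt_one
      · positivity
      · rw [div_lt_one hs0]; exact hts
    have hev : ∀ᶠ k : ℕ in Filter.atTop, (t / s) ^ k < c :=
      hratio.eventually_lt_const hc0
    have hev2 : ∀ᶠ k : ℕ in Filter.atTop,
        (t.toNNReal : ℝ≥0∞) ≤ (‖a ^ k‖₊ : ℝ≥0∞) ^ (1 / (k : ℝ)) := by
      filter_upwards [hev, Filter.eventually_ge_atTop 1] with k hk hk1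
      have hkn : (k : ℝ) ≠ 0 := by
        have : (1:ℝ) ≤ (k:ℝ) := by exact_mod_cast hk1
        linarith
      have htk : t ^ k ≤ ‖a ^ k‖ := by
        have he : (t / s) ^ k * s ^ k = t ^ k := by
          rw [div_pow]; field_simp
        have h4 : (t / s) ^ k * s ^ k ≤ c * s ^ k :=
          mul_le_mul_of_nonneg_right hk.le (pow_nonneg hs0.le k)
        rw [he] at h4
        exact le_trans h4 (hnorm k)
      have h3 : t.toNNReal ^ k ≤ ‖a ^ k‖₊ := by
        rw [← Real.toNNReal_pow ht0.le, ← norm_toNNReal]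
        exact Real.toNNReal_le_toNNReal htk
      calc (t.toNNReal : ℝ≥0∞)
          = (((t.toNNReal ^ k : ℝ≥0) : ℝ≥0∞)) ^ (1 / (k : ℝ)) := by
            rw [ENNReal.coe_pow, ← ENNReal.rpow_natCast, ← ENNReal.rpow_mul,
              mul_one_div_cancel hkn, ENNReal.rpow_one]
        _ ≤ (‖a ^ k‖₊ : ℝ≥0∞) ^ (1 / (k : ℝ)) := by
            apply ENNReal.rpow_le_rpow _ (by positivity)
            exact_mod_cast h3
    exact ge_of_tendsto hT hev2
  have hub : spectralRadius ℂ a ≤ ((specRad B).toNNReal : ℝ≥0∞) := by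
    apply iSup₂_le
    intro μ hμ
    have hroot : (B.map Complex.ofReal).charpoly.IsRoot μ := isRoot_of_mem_spectrum hμ
    rw [ENNReal.coe_le_coe, ← NNReal.coe_le_coe, Real.coe_toNNReal _ (specRad_nonneg B)]
    simpa using le_specRad hroot
  by_contra hcon
  push_neg at hcon
  have hr0 := specRad_nonneg B
  set t := (specRad B + s) / 2 with htdef
  have ht0 : 0 < t := by simp only [htdef]; linarith
  have hts : t < s := by simp only [htdef]; linarith
  have h1 := le_trans (key t ht0 hts) hub
  rw [ENNReal.coe_le_coe, Real.toNNReal_le_toNNReal_iff hr0] at h1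
  simp only [htdef] at h1
  linarith

end Nonneg

section Irr

variable {n : ℕ}

lemma onePlus_entry_nonneg {B : Matrix (Fin n) (Fin n) ℝ} (hB : ∀ i j, 0 ≤ B i j)
    (i j : Fin n) : 0 ≤ (1 + B) i j := by
  simp only [Matrix.add_apply, Matrix.one_apply]
  split <;> [linarith [hB i j]; simpa using hB i j]

lemma onePlus_pow_entry_mono {B : Matrix (Fin n) (Fin n) ℝ} (hB : ∀ i j, 0 ≤ B i j)
    {k l : ℕ} (hkl : k ≤ l) (i j : Fin n) : ((1 + B) ^ k) i j ≤ ((1 + B) ^ l) i j := by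
  induction l, hkl using Nat.le_induction with
  | base => exact le_refl _
  | succ l hkl ih =>
    have hone : (1:ℝ) ≤ (1 + B) j j := by
      simp only [Matrix.add_apply, Matrix.one_apply_eq]
      linarith [hB j j]
    calc ((1 + B) ^ k) i j ≤ ((1 + B) ^ l) i j := ih
      _ = ((1 + B) ^ l) i j * 1 := (mul_one _).symm
      _ ≤ ((1 + B) ^ l) i j * ((1 + B) j j) :=
          mul_le_mul_of_nonneg_left hone (pow_entry_nonneg (onePlus_entry_nonneg hB) l i j)
      _ ≤ ((1 + B) ^ (l + 1)) i j := by
          rw [pow_succ, Matrix.mul_apply]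
          exact Finset.single_le_sum
            (f := fun a => ((1 + B) ^ l) i a * (1 + B) a j)
            (fun a _ => mul_nonneg (pow_entry_nonneg (onePlus_entry_nonneg hB) l i a)
              (onePlus_entry_nonneg hB a j)) (Finset.mem_univ j)

lemma exists_pow_pos {B : Matrix (Fin n) (Fin n) ℝ} (hB : ∀ i j, 0 ≤ B i j) {i j : Fin n}
    (h : Relation.ReflTransGen (fun a b => B a b ≠ 0) i j) :
    ∃ k : ℕ, 0 < ((1 + B) ^ k) i j := by
  induction h with
  | refl => exact ⟨0, by simp [Matrix.one_apply]⟩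
  | @tail b c _ hbc ih =>
    obtain ⟨k, hk⟩ := ih
    refine ⟨k + 1, ?_⟩
    have hedge : 0 < (1 + B) b c := by
      have h1 : 0 < B b c := lt_of_le_of_ne (hB b c) (Ne.symm hbc)
      have h2 : (0:ℝ) ≤ (1 : Matrix (Fin n) (Fin n) ℝ) b c := by
        simp only [Matrix.one_apply]; split <;> norm_num
      simp only [Matrix.add_apply]; linarith
    calc (0:ℝ) < ((1 + B) ^ k) i b * (1 + B) b c := mul_pos hk hedge
      _ ≤ ((1 + B) ^ (k + 1)) i c := by
          rw [pow_succ, Matrix.mul_apply]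
          exact Finset.single_le_sum
            (f := fun a => ((1 + B) ^ k) i a * (1 + B) a c)
            (fun a _ => mul_nonneg (pow_entry_nonneg (onePlus_entry_nonneg hB) k i a)
              (onePlus_entry_nonneg hB a c)) (Finset.mem_univ b)

lemma exists_pos_pow_of_irred {B : Matrix (Fin n) (Fin n) ℝ} (hB : ∀ i j, 0 ≤ B i j)
    (hIrr : Irred B) : ∃ N : ℕ, ∀ i j, 0 < ((1 + B) ^ N) i j := by
  have hch : ∀ p : Fin n × Fin n, ∃ k : ℕ, 0 < ((1 + B) ^ k) p.1 p.2 :=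
    fun p => exists_pow_pos hB (hIrr p.1 p.2)
  refine ⟨Finset.univ.sup (fun p : Fin n × Fin n => (hch p).choose), fun i j => ?_⟩
  exact lt_of_lt_of_le (hch (i, j)).choose_spec
    (onePlus_pow_entry_mono hB
      (Finset.le_sup (f := fun p : Fin n × Fin n => (hch p).choose) (Finset.mem_univ (i, j))) i j)

end Irr

end Stmt8Aux


/-- a nonnegative square matrix is reducible iff its spectral radius is
attained by a proper principal submatrix. -/
theorem stmt8 {n : ℕ} (hn : 2 ≤ n) (B : Matrix (Fin n) (Fin n) ℝ)
    (hB : ∀ i j, 0 ≤ B i j) :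
    ¬ Irred B ↔ ∃ S : Finset (Fin n), S.Nonempty ∧ S ≠ Finset.univ ∧
      specRad (B.submatrix (fun i : {x // x ∈ S} => (i : Fin n))
        (fun i : {x // x ∈ S} => (i : Fin n))) = specRad B := by
  haveI hne : Nonempty (Fin n) := ⟨⟨0, by omega⟩⟩
  constructor
  · -- reducible → spectral radius attained on a proper principal submatrix
    intro hIrr
    rw [Irred] at hIrr; push_neg at hIrr
    obtain ⟨i, j, hij⟩ := hIrr
    set S : Finset (Fin n) := Finset.univ.filter
      (fun x => Relation.ReflTransGen (fun a b => B a b ≠ 0) i x) with hS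
    have hiS : i ∈ S := by
      rw [hS, Finset.mem_filter]
      exact ⟨Finset.mem_univ i, Relation.ReflTransGen.refl⟩
    have hjS : j ∉ S := by
      rw [hS, Finset.mem_filter]
      exact fun h => hij h.2
    have hclosedC : ∀ a b, a ∈ S → b ∉ S → (B.map Complex.ofReal) a b = 0 := by
      intro a b ha hb
      have hab : B a b = 0 := by
        by_contra hBab
        apply hb
        rw [hS, Finset.mem_filter] at ha ⊢
        exact ⟨Finset.mem_univ b, ha.2.tail hBab⟩
      simp [Matrix.map_apply, hab]
    have hfac := Stmt8Aux.charpoly_subblocks (B.map Complex.ofReal) S hclosedC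
    set A := B.submatrix (fun i : {x // x ∈ S} => (i : Fin n))
      (fun i : {x // x ∈ S} => (i : Fin n)) with hA
    set D := B.submatrix (fun i : {x // x ∉ S} => (i : Fin n))
      (fun i : {x // x ∉ S} => (i : Fin n)) with hD
    have hsubA : (B.map Complex.ofReal).submatrix (fun i : {x // x ∈ S} => (i : Fin n))
        (fun i : {x // x ∈ S} => (i : Fin n)) = A.map Complex.ofReal := rfl
    have hsubD : (B.map Complex.ofReal).submatrix (fun i : {x // x ∉ S} => (i : Fin n))
        (fun i : {x // x ∉ S} => (i : Fin n)) = D.map Complex.ofReal := rfl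
    rw [hsubA, hsubD] at hfac
    haveI hnA : Nonempty {x // x ∈ S} := ⟨⟨i, hiS⟩⟩
    haveI hnD : Nonempty {x // x ∉ S} := ⟨⟨j, hjS⟩⟩
    obtain ⟨μ0, hroot0, heq0⟩ := Stmt8Aux.specRad_mem B
    have hcases : (A.map Complex.ofReal).charpoly.IsRoot μ0 ∨
        (D.map Complex.ofReal).charpoly.IsRoot μ0 := by
      have := hroot0
      rw [Polynomial.IsRoot, hfac, Polynomial.eval_mul] at this
      rcases mul_eq_zero.mp this with h | h
      · exact Or.inl h
      · exact Or.inr h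
    rcases hcases with hcase | hcase
    · refine ⟨S, ⟨i, hiS⟩, ?_, ?_⟩
      · intro h
        rw [h] at hjS
        exact hjS (Finset.mem_univ j)
      · rw [← hA]
        apply le_antisymm
        · obtain ⟨μA, hrootA, hAeq⟩ := Stmt8Aux.specRad_mem A
          rw [hAeq]
          apply Stmt8Aux.le_specRad
          rw [Polynomial.IsRoot, hfac, Polynomial.eval_mul, hrootA, zero_mul]
        · rw [heq0]
          exact Stmt8Aux.le_specRad hcase
    · -- use the complement
      refine ⟨Sᶜ, ⟨j, Finset.mem_compl.mpr hjS⟩, ?_, ?_⟩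
      · intro h
        have : i ∈ Sᶜ := h ▸ Finset.mem_univ i
        exact (Finset.mem_compl.mp this) hiS
      · -- identify the Sᶜ submatrix with D up to reindexing
        set e2 : {x // x ∈ Sᶜ} ≃ {x // x ∉ S} :=
          Equiv.subtypeEquivRight (fun x => Finset.mem_compl) with he2
        set A' := B.submatrix (fun i : {x // x ∈ Sᶜ} => (i : Fin n))
          (fun i : {x // x ∈ Sᶜ} => (i : Fin n)) with hA'
        have hrei : A'.map Complex.ofReal =
            Matrix.reindex e2.symm e2.symm (D.map Complex.ofReal) := by
          ext x y
          simp only [he2, Matrix.reindex_apply, Matrix.submatrix_apply, Matrix.map_apply,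
            Equiv.symm_symm, Equiv.subtypeEquivRight_apply]
          rfl
        have hcp : (A'.map Complex.ofReal).charpoly = (D.map Complex.ofReal).charpoly := by
          rw [hrei]
          exact Matrix.charpoly_reindex e2.symm (D.map Complex.ofReal)
        have hspec : specRad A' = specRad D := Stmt8Aux.specRad_congr hcp
        rw [hspec]
        apply le_antisymm
        · obtain ⟨μD, hrootD, hDeq⟩ := Stmt8Aux.specRad_mem D
          rw [hDeq]
          apply Stmt8Aux.le_specRad
          rw [Polynomial.IsRoot, hfac, Polynomial.eval_mul, hrootD, mul_zero]
        · rw [heq0]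
          exact Stmt8Aux.le_specRad hcase
  · -- irreducible → all proper principal submatrices have smaller spectral radius
    rintro ⟨S, hSne, hSuniv, heq⟩ hIrr
    obtain ⟨x0, hx0⟩ := hSne
    haveI : Nonempty {x // x ∈ S} := ⟨⟨x0, hx0⟩⟩
    set A := B.submatrix (fun i : {x // x ∈ S} => (i : Fin n))
      (fun i : {x // x ∈ S} => (i : Fin n)) with hA
    obtain ⟨μ, hroot, hμ⟩ := Stmt8Aux.specRad_mem A
    set ρ := specRad B with hρ
    have hρabs : ρ = ‖μ‖ := by rw [← heq]; exact hμ
    have hρ0 : 0 ≤ ρ := by rw [hρabs]; exact norm_nonneg _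
    obtain ⟨v, hv0, hveq⟩ := Stmt8Aux.exists_eigenvector hroot
    set y : Fin n → ℝ := fun i => if h : i ∈ S then ‖v ⟨i, h⟩‖ else 0 with hy
    have hy0 : ∀ i, 0 ≤ y i := by
      intro i
      by_cases h : i ∈ S
      · rw [hy]; dsimp only; rw [dif_pos h]; exact norm_nonneg _
      · rw [hy]; dsimp only; rw [dif_neg h]
    have hyS : ∀ i ∉ S, y i = 0 := by
      intro i hi; rw [hy]; dsimp only; rw [dif_neg hi]
    obtain ⟨a0, ha0⟩ : ∃ a : {x // x ∈ S}, v a ≠ 0 := by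
      by_contra hc; push_neg at hc; exact hv0 (funext fun a => hc a)
    have hy_pos : 0 < y (a0 : Fin n) := by
      rw [hy]; dsimp only; rw [dif_pos a0.2]
      have : (⟨(a0 : Fin n), a0.2⟩ : {x // x ∈ S}) = a0 := Subtype.coe_eta a0 a0.2
      rw [this]
      exact norm_pos_iff.mpr ha0
    have hsub : ∀ i, ρ * y i ≤ (B *ᵥ y) i := by
      intro i
      by_cases hi : i ∈ S
      · have h1 : μ * v ⟨i, hi⟩ = ∑ j : {x // x ∈ S}, ((B i (j : Fin n) : ℝ) : ℂ) * v j := by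
          have h1' := congrFun hveq ⟨i, hi⟩
          simp only [Matrix.mulVec, dotProduct, Pi.smul_apply, smul_eq_mul] at h1'
          exact h1'.symm
        have hyi : y i = ‖v ⟨i, hi⟩‖ := by
          rw [hy]; dsimp only; rw [dif_pos hi]
        have h2 : ρ * y i = ‖(∑ j : {x // x ∈ S}, ((B i (j : Fin n) : ℝ) : ℂ) * v j)‖ := by
          rw [hyi, hρabs, ← norm_mul]
          exact congrArg (fun z : ℂ => ‖z‖) h1
        rw [h2]
        have h3 : ‖(∑ j : {x // x ∈ S}, ((B i (j : Fin n) : ℝ) : ℂ) * v j)‖ ≤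
            ∑ j : {x // x ∈ S}, B i (j : Fin n) * y (j : Fin n) := by
          refine le_trans (norm_sum_le _ _) ?_
          refine Finset.sum_le_sum fun j _ => ?_
          rw [norm_mul, Complex.norm_of_nonneg (hB i (j : Fin n))]
          apply mul_le_mul_of_nonneg_left _ (hB i (j : Fin n))
          have hyj : y (j : Fin n) = ‖v ⟨(j : Fin n), j.2⟩‖ := by
            rw [hy]; dsimp only; rw [dif_pos j.2]
          rw [hyj, Subtype.coe_eta]
        have h4 : ∑ j : {x // x ∈ S}, B i (j : Fin n) * y (j : Fin n) ≤ (B *ᵥ y) i := by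
          rw [Finset.sum_coe_sort S (fun j => B i j * y j)]
          simp only [Matrix.mulVec, dotProduct]
          apply Finset.sum_le_sum_of_subset_of_nonneg (Finset.subset_univ S)
          intro j _ _
          exact mul_nonneg (hB i j) (hy0 j)
        exact le_trans h3 h4
      · rw [hyS i hi, mul_zero]
        exact Stmt8Aux.mulVec_nonneg hB hy0 i
    obtain ⟨N, hN⟩ := Stmt8Aux.exists_pos_pow_of_irred hB hIrr
    set P := (1 + B) ^ N with hPdef
    have hP0 : ∀ i j, 0 ≤ P i j := fun i j => le_of_lt (hN i j)
    by_cases hcase : ∀ i, (B *ᵥ y) i = ρ * y i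
    · -- exact eigenvector case: y vanishes off S yet must be positive everywhere
      have hstep : (1 + B) *ᵥ y = fun i => (1 + ρ) * y i := by
        funext i
        rw [Matrix.add_mulVec, Matrix.one_mulVec]
        simp only [Pi.add_apply]
        rw [hcase i]; ring
      have hPy : ∀ k : ℕ, ((1 + B) ^ k) *ᵥ y = fun i => (1 + ρ) ^ k * y i := by
        intro k
        induction k with
        | zero => funext i; simp [Matrix.one_mulVec]
        | succ k ih =>
          have hsp : (1 + B) ^ (k + 1) *ᵥ y = (1 + B) ^ k *ᵥ ((1 + B) *ᵥ y) := by
            rw [Matrix.mulVec_mulVec, ← pow_succ]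
          rw [hsp, hstep]
          funext i
          have h5 : ((1 + B) ^ k *ᵥ fun i => (1 + ρ) * y i) i =
              (1 + ρ) * (((1 + B) ^ k *ᵥ y) i) := by
            simp only [Matrix.mulVec, dotProduct, Finset.mul_sum]
            exact Finset.sum_congr rfl fun j _ => by ring
          rw [h5, ih]
          dsimp only
          ring
      obtain ⟨j0, hj0⟩ : ∃ j0, j0 ∉ S := by
        by_contra hc; push_neg at hc
        exact hSuniv (Finset.eq_univ_iff_forall.mpr hc)
      have h6 : (P *ᵥ y) j0 = 0 := by
        rw [hPdef, hPy N]
        dsimp only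
        rw [hyS j0 hj0, mul_zero]
      have h7 : 0 < (P *ᵥ y) j0 :=
        lt_of_lt_of_le (mul_pos (hN j0 (a0 : Fin n)) hy_pos)
          (Stmt8Aux.single_le_mulVec hP0 hy0 j0 (a0 : Fin n))
      linarith
    · -- strict subinvariance somewhere: bootstrap to a strictly larger spectral radius
      push_neg at hcase
      obtain ⟨i1, hi1⟩ := hcase
      set w : Fin n → ℝ := fun i => (B *ᵥ y) i - ρ * y i with hw
      have hw0 : ∀ i, 0 ≤ w i := fun i => sub_nonneg.mpr (hsub i)
      have hwi1 : 0 < w i1 :=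
        lt_of_le_of_ne (hw0 i1) (Ne.symm (sub_ne_zero.mpr hi1))
      set u := P *ᵥ y with hu
      have hu0 : ∀ i, 0 < u i :=
        fun i => lt_of_lt_of_le (mul_pos (hN i (a0 : Fin n)) hy_pos)
          (Stmt8Aux.single_le_mulVec hP0 hy0 i (a0 : Fin n))
      have hcm : Commute B P := ((Commute.one_right B).add_right (Commute.refl B)).pow_right N
      have hBu : ∀ i, (B *ᵥ u) i = ρ * u i + (P *ᵥ w) i := by
        intro i
        have h8 : B *ᵥ u = P *ᵥ (B *ᵥ y) := by
          rw [hu, Matrix.mulVec_mulVec, Matrix.mulVec_mulVec, hcm.eq]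
        have h9 : (B *ᵥ y) = fun i => ρ * y i + w i := by
          funext i; rw [hw]; dsimp only; ring
        rw [h8, h9, hu]
        simp only [Matrix.mulVec, dotProduct, Finset.mul_sum, hw]
        rw [← Finset.sum_add_distrib]
        exact Finset.sum_congr rfl fun j _ => by ring
      have hPw : ∀ i, 0 < (P *ᵥ w) i :=
        fun i => lt_of_lt_of_le (mul_pos (hN i i1) hwi1)
          (Stmt8Aux.single_le_mulVec hP0 hw0 i i1)
      set ε := Finset.univ.inf' Finset.univ_nonempty (fun i => (P *ᵥ w) i / u i) with hε
      have hε0 : 0 < ε := by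
        rw [hε, Finset.lt_inf'_iff]
        exact fun i _ => div_pos (hPw i) (hu0 i)
      have hfinal : ∀ i, (ρ + ε) * u i ≤ (B *ᵥ u) i := by
        intro i
        have h10 : ε ≤ (P *ᵥ w) i / u i := Finset.inf'_le _ (Finset.mem_univ i)
        rw [le_div_iff₀ (hu0 i)] at h10
        rw [hBu i]
        nlinarith
      have hge := Stmt8Aux.le_specRad_of_subinvariant hB hu0
        (by linarith : (0:ℝ) ≤ ρ + ε) hfinal
      rw [← hρ] at hge
      linarith
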